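/- Let Λ be a row-finite, locally-convex k-graph and R a commutative ring with 1. Let I be a basic graded ideal of KP_R(Λ), and let (q,t) and (p,m) be the universal Kumjian–Pask families in KP_R(Λ \ H(I)) and KP_R(Λ), respectively. Then there exists an R-algebra isomorphism π : KP_R(Λ \ H(I)) → KP_R(Λ)/I such that π(q_v) = p_v + I, π(t_λ) = m_λ + I, and π(t_{μ*}) = m_{μ*} + I for all vertices v ∈ Λ^0 \ H(I) and all paths λ, μ with source in Λ^0 \ H(I). -/

import Mathlib

open scoped BigOperators

/-- A `k`-graph: a countable small category together with a degree functor
`d : Λ → ℕ^k` satisfying the unique factorization property.  Composition is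
a total function which is only meaningful on composable pairs. -/
structure KGraph (k : ℕ) where
  Obj : Type
  Mor : Type
  obj_countable : Countable Obj
  mor_countable : Countable Mor
  /-- codomain (range) -/
  r : Mor → Obj
  /-- domain (source) -/
  s : Mor → Obj
  /-- identity morphisms (vertices) -/
  id : Obj → Mor
  /-- composition (junk value on non-composable pairs) -/
  comp : Mor → Mor → Mor
  /-- the degree functor -/
  d : Mor → Fin k → ℕ
  r_id : ∀ v, r (id v) = v
  s_id : ∀ v, s (id v) = v
  d_id : ∀ v, d (id v) = 0
  eq_id_of_d_eq_zero : ∀ f, d f = 0 → f = id (r f)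
  r_comp : ∀ f g, s f = r g → r (comp f g) = r f
  s_comp : ∀ f g, s f = r g → s (comp f g) = s g
  d_comp : ∀ f g, s f = r g → d (comp f g) = d f + d g
  id_comp : ∀ f, comp (id (r f)) f = f
  comp_id : ∀ f, comp f (id (s f)) = f
  comp_assoc : ∀ f g h, s f = r g → s g = r h →
    comp (comp f g) h = comp f (comp g h)
  /-- the unique factorization property -/
  factor : ∀ f (m n : Fin k → ℕ), d f = m + n →
    ∃! p : Mor × Mor, s p.1 = r p.2 ∧ d p.1 = m ∧ d p.2 = n ∧ f = comp p.1 p.2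

namespace KGraph

variable {k : ℕ} (Λ : KGraph k)

/-- `vΛ^m` : the morphisms with range `v` and degree `m`. -/
def vSet (v : Λ.Obj) (m : Fin k → ℕ) : Set Λ.Mor :=
  {f | Λ.r f = v ∧ Λ.d f = m}

/-- `Λ` is row-finite if each `vΛ^m` is finite. -/
def RowFinite : Prop := ∀ (v : Λ.Obj) (m : Fin k → ℕ), (Λ.vSet v m).Finite

/-- `Λ` is locally-convex. -/
def LocallyConvex : Prop :=
  ∀ (v : Λ.Obj) (i j : Fin k), i ≠ j →
    ∀ f ∈ Λ.vSet v (Pi.single i 1), ∀ g ∈ Λ.vSet v (Pi.single j 1),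
      (Λ.vSet (Λ.s f) (Pi.single j 1)).Nonempty ∧
      (Λ.vSet (Λ.s g) (Pi.single i 1)).Nonempty

/-- `(Λ \ H)^{≤ n}`, the set `Λ^{≤n}` computed in the subgraph obtained by removing the
vertices of `H`.  Taking `H = ∅` gives `Λ^{≤ n}` itself. -/
def pathsLeIn (H : Set Λ.Obj) (n : Fin k → ℕ) : Set Λ.Mor :=
  {f | Λ.r f ∉ H ∧ Λ.s f ∉ H ∧ (∀ i, Λ.d f i ≤ n i) ∧
    ∀ i, Λ.d f i < n i →
      {g : Λ.Mor | Λ.r g = Λ.s f ∧ Λ.d g = Pi.single i 1 ∧ Λ.s g ∉ H} = ∅}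

/-- `Λ^{≤ n}`. -/
def pathsLe (n : Fin k → ℕ) : Set Λ.Mor := Λ.pathsLeIn ∅ n

/-- `vΛ^{≤ n}`. -/
def vPathsLe (v : Λ.Obj) (n : Fin k → ℕ) : Set Λ.Mor :=
  {f ∈ Λ.pathsLe n | Λ.r f = v}

/-- A set of vertices is hereditary if it is closed under taking sources of paths. -/
def Hereditary (H : Set Λ.Obj) : Prop := ∀ f : Λ.Mor, Λ.r f ∈ H → Λ.s f ∈ H

/-- A set of vertices is saturated. -/
def Saturated (H : Set Λ.Obj) : Prop :=
  ∀ v : Λ.Obj, (∃ i : Fin k, ∀ f ∈ Λ.vPathsLe v (Pi.single i 1), Λ.s f ∈ H) → v ∈ H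

/-- `T(w)` : the set of sources of paths with range `w`. -/
def Tset (w : Λ.Obj) : Set Λ.Obj := {u | ∃ f : Λ.Mor, Λ.r f = w ∧ Λ.s f = u}

end KGraph

/-- The annihilator `J^⊥ = {a | ax = xa = 0 for all x ∈ J}` of a two-sided ideal,
as a two-sided ideal. -/
def TwoSidedIdeal.annihilator {A : Type*} [Ring A] (J : TwoSidedIdeal A) :
    TwoSidedIdeal A :=
  TwoSidedIdeal.mk' {a : A | ∀ x ∈ J, a * x = 0 ∧ x * a = 0}
    (fun x hx => by simp)
    (fun {a b} ha hb x hx => by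
      rw [add_mul, mul_add, (ha x hx).1, (ha x hx).2, (hb x hx).1, (hb x hx).2]
      simp)
    (fun {a} ha x hx => by
      rw [neg_mul, mul_neg, (ha x hx).1, (ha x hx).2]; simp)
    (fun {a b} hb x hx => by
      constructor
      · rw [mul_assoc, (hb x hx).1, mul_zero]
      · have : x * a ∈ J := J.mul_mem_right _ _ hx
        rw [← mul_assoc, (hb _ this).2])
    (fun {a b} ha x hx => by
      constructor
      · have : b * x ∈ J := J.mul_mem_left _ _ hx
        rw [mul_assoc, (ha _ this).1]
      · rw [← mul_assoc, (ha x hx).2, zero_mul])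

lemma TwoSidedIdeal.mem_annihilator {A : Type*} [Ring A] (J : TwoSidedIdeal A) (a : A) :
    a ∈ J.annihilator ↔ ∀ x ∈ J, a * x = 0 ∧ x * a = 0 := by
  simp [TwoSidedIdeal.annihilator]

/-- An ideal is regular if it equals its double annihilator. -/
def TwoSidedIdeal.IsRegular {A : Type*} [Ring A] (J : TwoSidedIdeal A) : Prop :=
  J.annihilator.annihilator = J

section KumjianPask

variable {k : ℕ}

/-- A Kumjian–Pask `Λ`-family in an `R`-algebra `A`.  Here `S` is defined on all of
`Λ`, with `S` of a vertex equal to the corresponding idempotent `P`, and `Sstar`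
encodes the ghost paths. -/
structure KPFamily (Λ : KGraph k) (R : Type*) [CommRing R]
    (A : Type*) [Ring A] [Algebra R A] where
  P : Λ.Obj → A
  S : Λ.Mor → A
  Sstar : Λ.Mor → A
  S_id : ∀ v, S (Λ.id v) = P v
  Sstar_id : ∀ v, Sstar (Λ.id v) = P v
  kp1_idem : ∀ v, P v * P v = P v
  kp1_orth : ∀ u v, u ≠ v → P u * P v = 0
  kp2_comp : ∀ f g, Λ.s f = Λ.r g → S f * S g = S (Λ.comp f g)
  kp2_comp_star : ∀ f g, Λ.s f = Λ.r g → Sstar g * Sstar f = Sstar (Λ.comp f g)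
  kp2_r : ∀ f, P (Λ.r f) * S f = S f
  kp2_s : ∀ f, S f * P (Λ.s f) = S f
  kp2_star_s : ∀ f, P (Λ.s f) * Sstar f = Sstar f
  kp2_star_r : ∀ f, Sstar f * P (Λ.r f) = Sstar f
  kp3_eq : ∀ (n : Fin k → ℕ), n ≠ 0 → ∀ f ∈ Λ.pathsLe n,
    Sstar f * S f = P (Λ.s f)
  kp3_ne : ∀ (n : Fin k → ℕ), n ≠ 0 → ∀ f ∈ Λ.pathsLe n, ∀ g ∈ Λ.pathsLe n,
    f ≠ g → Sstar f * S g = 0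
  kp4 : ∀ (v : Λ.Obj) (n : Fin k → ℕ), n ≠ 0 →
    ∀ (hfin : (Λ.vPathsLe v n).Finite),
      P v = ∑ f ∈ hfin.toFinset, S f * Sstar f

universe w

/-- `A`, equipped with the Kumjian–Pask `Λ`-family `F`, is the Kumjian–Pask algebra
`KP_R(Λ)`: it satisfies the universal property, and `r • p_v ≠ 0` for `r ≠ 0`. -/
def IsKPAlgebra (Λ : KGraph k) (R : Type*) [CommRing R]
    (A : Type*) [Ring A] [Algebra R A] (F : KPFamily Λ R A) : Prop :=
  (∀ (B : Type w) [Ring B] [Algebra R B] (G : KPFamily Λ R B),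
    ∃! π : A →ₐ[R] B,
      (∀ v, π (F.P v) = G.P v) ∧ (∀ f, π (F.S f) = G.S f) ∧
      (∀ f, π (F.Sstar f) = G.Sstar f)) ∧
  (∀ r : R, r ≠ 0 → ∀ v : Λ.Obj, r • F.P v ≠ 0)

namespace KPFamily

variable {Λ : KGraph k} {R : Type*} [CommRing R] {A : Type*} [Ring A] [Algebra R A]
variable (F : KPFamily Λ R A)

/-- The homogeneous component `KP_R(Λ)_n = span_R { s_α s_{β*} : d(α) - d(β) = n }`. -/
def component (n : Fin k → ℤ) : Submodule R A :=
  Submodule.span R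
    {x : A | ∃ α β : Λ.Mor, (∀ i, (Λ.d α i : ℤ) - (Λ.d β i : ℤ) = n i) ∧
      x = F.S α * F.Sstar β}

/-- An ideal is graded when it is spanned by its homogeneous elements. -/
def IsGradedIdeal (J : TwoSidedIdeal A) : Prop :=
  ∀ a ∈ J, a ∈ TwoSidedIdeal.span
    {x : A | x ∈ J ∧ ∃ n : Fin k → ℤ, x ∈ F.component n}

/-- An ideal is basic if `r • p_v ∈ J` for `r ≠ 0` implies `p_v ∈ J`. -/
def IsBasicIdeal (J : TwoSidedIdeal A) : Prop :=
  ∀ (r : R) (v : Λ.Obj), r ≠ 0 → r • F.P v ∈ J → F.P v ∈ J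

/-- `H(I) = { v : p_v ∈ I }`. -/
def HSet (I : TwoSidedIdeal A) : Set Λ.Obj := {v | F.P v ∈ I}

/-- `H̄(I) = { r(λ) : λ ∈ Λ, s(λ) ∈ H(I) }`. -/
def HbarSet (I : TwoSidedIdeal A) : Set Λ.Obj :=
  {w | ∃ f : Λ.Mor, Λ.r f = w ∧ Λ.s f ∈ F.HSet I}

/-- `I(H)`: the (two-sided) ideal generated by the vertex idempotents of `H`. -/
def idealOf (H : Set Λ.Obj) : TwoSidedIdeal A :=
  TwoSidedIdeal.span (F.P '' H)

end KPFamily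

end KumjianPask

section Restriction

/-- An identification of the `k`-graph `Λ'` with the subgraph `Λ \ H` of `Λ`:
an isomorphism of `Λ'` onto the subcategory of `Λ` whose objects are `Λ⁰ \ H` and
whose morphisms are the paths with range and source outside `H`, compatible with
the degree functors. -/
structure RestrictionIso {k : ℕ} (Λ' Λ : KGraph k) (H : Set Λ.Obj) where
  objMap : Λ'.Obj → Λ.Obj
  morMap : Λ'.Mor → Λ.Mor
  objMap_injective : Function.Injective objMap
  morMap_injective : Function.Injective morMap
  objMap_range : Set.range objMap = Hᶜ
  morMap_range : Set.range morMap = {f : Λ.Mor | Λ.r f ∉ H ∧ Λ.s f ∉ H}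
  map_r : ∀ f, Λ.r (morMap f) = objMap (Λ'.r f)
  map_s : ∀ f, Λ.s (morMap f) = objMap (Λ'.s f)
  map_d : ∀ f, Λ.d (morMap f) = Λ'.d f
  map_id : ∀ v, morMap (Λ'.id v) = Λ.id (objMap v)
  map_comp : ∀ f g, Λ'.s f = Λ'.r g →
    morMap (Λ'.comp f g) = Λ.comp (morMap f) (morMap g)

end Restriction

section GraphAux

variable {k : ℕ} {Λ : KGraph k}

lemma KGraph.mem_pathsLe {f : Λ.Mor} {n : Fin k → ℕ} :
    f ∈ Λ.pathsLe n ↔ (∀ i, Λ.d f i ≤ n i) ∧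
      ∀ i, Λ.d f i < n i → ∀ g : Λ.Mor, ¬(Λ.r g = Λ.s f ∧ Λ.d g = Pi.single i 1) := by
  simp [KGraph.pathsLe, KGraph.pathsLeIn, Set.eq_empty_iff_forall_notMem]

lemma KGraph.mem_vPathsLe {f : Λ.Mor} {v : Λ.Obj} {n : Fin k → ℕ} :
    f ∈ Λ.vPathsLe v n ↔ f ∈ Λ.pathsLe n ∧ Λ.r f = v := Iff.rfl

lemma KGraph.id_injective : Function.Injective Λ.id := by
  intro u v h
  have := congrArg Λ.r h
  rwa [Λ.r_id, Λ.r_id] at this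

lemma KGraph.vPathsLe_zero (v : Λ.Obj) : Λ.vPathsLe v 0 = {Λ.id v} := by
  ext f
  constructor
  · rintro ⟨hf, hr⟩
    rw [KGraph.mem_pathsLe] at hf
    have hd : Λ.d f = 0 := funext fun i => Nat.le_zero.mp (hf.1 i)
    have := Λ.eq_id_of_d_eq_zero f hd
    rw [Set.mem_singleton_iff, this, hr]
  · rintro rfl
    refine ⟨KGraph.mem_pathsLe.mpr ⟨fun i => by simp [Λ.d_id], fun i h => by simp [Λ.d_id] at h⟩, Λ.r_id v⟩

lemma KGraph.self_mem_pathsLe (f : Λ.Mor) : f ∈ Λ.pathsLe (Λ.d f) :=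
  KGraph.mem_pathsLe.mpr ⟨fun _ => le_rfl, fun i h => absurd h (lt_irrefl _)⟩

lemma KGraph.comp_mem_pathsLe (α : Λ.Mor) {m : Fin k → ℕ} {lam : Λ.Mor}
    (hlam : lam ∈ Λ.vPathsLe (Λ.s α) m) :
    Λ.comp α lam ∈ Λ.pathsLe (fun i => Λ.d α i + m i) := by
  obtain ⟨hl, hr⟩ := hlam
  rw [KGraph.mem_pathsLe] at hl
  have hcomp : Λ.s α = Λ.r lam := hr.symm
  have hd := Λ.d_comp α lam hcomp
  have hs := Λ.s_comp α lam hcomp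
  rw [KGraph.mem_pathsLe]
  constructor
  · intro i; rw [hd]; exact Nat.add_le_add_left (hl.1 i) _
  · intro i hi g hg
    rw [hd] at hi
    exact hl.2 i (by simpa using Nat.lt_of_add_lt_add_left hi) g (by rwa [hs] at hg)

lemma KGraph.vPathsLe_finite (hrf : Λ.RowFinite) (v : Λ.Obj) (n : Fin k → ℕ) :
    (Λ.vPathsLe v n).Finite := by
  have hsub : Λ.vPathsLe v n ⊆ ⋃ m ∈ {m : Fin k → ℕ | ∀ i, m i ≤ n i}, Λ.vSet v m := by
    rintro f ⟨hf, hr⟩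
    rw [KGraph.mem_pathsLe] at hf
    exact Set.mem_biUnion (show Λ.d f ∈ {m : Fin k → ℕ | ∀ i, m i ≤ n i} from hf.1) ⟨hr, rfl⟩
  have hfin : ({m : Fin k → ℕ | ∀ i, m i ≤ n i}).Finite := by
    have : {m : Fin k → ℕ | ∀ i, m i ≤ n i} ⊆ Set.pi Set.univ (fun i => Set.Iic (n i)) := by
      intro m hm i _; exact hm i
    exact Set.Finite.subset (Set.Finite.pi (fun i => Set.finite_Iic _)) this
  exact Set.Finite.subset (Set.Finite.biUnion hfin (fun m _ => hrf v m)) hsub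

lemma KGraph.r_mem_of_pathsLe {f : Λ.Mor} {n : Fin k → ℕ} (h : f ∈ Λ.pathsLe n) :
    f ∈ Λ.vPathsLe (Λ.r f) n := ⟨h, rfl⟩

end GraphAux
section FamilyAux
open scoped Classical
variable {k : ℕ} {Λ : KGraph k} {R : Type*} [CommRing R] {A : Type*} [Ring A] [Algebra R A]
variable (E : KPFamily Λ R A)

lemma KPFamily.P_mul_P (u v : Λ.Obj) :
    E.P u * E.P v = if u = v then E.P u else 0 := by
  classical
  split
  · next h => rw [h, E.kp1_idem]
  · next h => exact E.kp1_orth u v h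

/-- Matrix-unit relations for paths in `Λ^{≤N}`. -/
lemma KPFamily.Sstar_mul_S {N : Fin k → ℕ} {α β : Λ.Mor}
    (hα : α ∈ Λ.pathsLe N) (hβ : β ∈ Λ.pathsLe N) :
    E.Sstar α * E.S β = if α = β then E.P (Λ.s α) else 0 := by
  classical
  by_cases hN : N = 0
  · subst hN
    have hdα : Λ.d α = 0 := funext fun i => Nat.le_zero.mp ((KGraph.mem_pathsLe.mp hα).1 i)
    have hdβ : Λ.d β = 0 := funext fun i => Nat.le_zero.mp ((KGraph.mem_pathsLe.mp hβ).1 i)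
    have hα' := Λ.eq_id_of_d_eq_zero α hdα
    have hβ' := Λ.eq_id_of_d_eq_zero β hdβ
    rw [hα', hβ', E.Sstar_id, E.S_id, E.P_mul_P, Λ.s_id]
    have : Λ.id (Λ.r α) = Λ.id (Λ.r β) ↔ Λ.r α = Λ.r β :=
      ⟨fun h => KGraph.id_injective h, fun h => by rw [h]⟩
    simp only [this]
  · split
    · next h => rw [h]; exact E.kp3_eq N hN β hβ
    · next h => exact E.kp3_ne N hN α hα β hβ h

lemma KPFamily.SSstar_eq_zero_of_src_ne {α β : Λ.Mor} (h : Λ.s α ≠ Λ.s β) :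
    E.S α * E.Sstar β = 0 := by
  have h1 : E.S α * E.Sstar β = (E.S α * E.P (Λ.s α)) * (E.P (Λ.s β) * E.Sstar β) := by
    rw [E.kp2_s, E.kp2_star_s]
  rw [h1, mul_assoc, ← mul_assoc (E.P (Λ.s α)), E.kp1_orth _ _ h, zero_mul, mul_zero]

/-- Expansion of `S α * Sstar β` over extensions in `Λ^{≤ (N - d α)}`. -/
lemma KPFamily.SSstar_expand {α β : Λ.Mor} (hs : Λ.s α = Λ.s β)
    {N : Fin k → ℕ} (hN : ∀ i, Λ.d α i ≤ N i)
    (hfin : (Λ.vPathsLe (Λ.s α) (fun i => N i - Λ.d α i)).Finite) :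
    E.S α * E.Sstar β =
      ∑ lam ∈ hfin.toFinset, E.S (Λ.comp α lam) * E.Sstar (Λ.comp β lam) := by
  by_cases hm : (fun i => N i - Λ.d α i) = (0 : Fin k → ℕ)
  · have hset : Λ.vPathsLe (Λ.s α) (fun i => N i - Λ.d α i) = {Λ.id (Λ.s α)} := by
      rw [hm]; exact KGraph.vPathsLe_zero _
    have : hfin.toFinset = {Λ.id (Λ.s α)} := by
      ext x; simp [Set.Finite.mem_toFinset, hset]
    rw [this, Finset.sum_singleton, Λ.comp_id α, hs, Λ.comp_id β]
  · have hP : E.P (Λ.s α) = ∑ lam ∈ hfin.toFinset, E.S lam * E.Sstar lam :=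
      E.kp4 (Λ.s α) _ hm hfin
    have h1 : E.S α * E.Sstar β = E.S α * (E.P (Λ.s α) * E.Sstar β) := by
      rw [hs, E.kp2_star_s β]
    rw [h1, hP, Finset.sum_mul, Finset.mul_sum]
    refine Finset.sum_congr rfl (fun lam hlam => ?_)
    have hlam' := hfin.mem_toFinset.mp hlam
    have hrl : Λ.r lam = Λ.s α := hlam'.2
    rw [mul_assoc (E.S lam), ← mul_assoc (E.S α), E.kp2_comp α lam hrl.symm,
        E.kp2_comp_star β lam (by rw [hrl, hs])]

end FamilyAux
section Grouping

lemma sum_smul_group {ι γ : Type*} [DecidableEq γ] {M : Type*} [AddCommMonoid M]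
    {R : Type*} [Semiring R] [Module R M] (S : Finset ι) (g : ι → γ) (c : ι → R) (φ : γ → M) :
    ∑ p ∈ S, c p • φ (g p)
      = ∑ q ∈ S.image g, (∑ p ∈ S.filter (fun p => g p = q), c p) • φ q := by
  rw [← Finset.sum_fiberwise_of_maps_to (fun p hp => Finset.mem_image_of_mem g hp)
    (fun p => c p • φ (g p))]
  refine Finset.sum_congr rfl fun q _ => ?_
  rw [Finset.sum_smul]
  exact Finset.sum_congr rfl fun p hp => by rw [(Finset.mem_filter.mp hp).2]

end Grouping

section Extract
universe u₁ u₂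
variable {k : ℕ} {Λ : KGraph k} {R : Type u₁} [CommRing R] {A : Type u₂} [Ring A] [Algebra R A]

open scoped Classical in
/-- The matrix-coefficient extraction computation. -/
lemma KPFamily.extract (E : KPFamily Λ R A) {N M : Fin k → ℕ} {μ α β ν : Λ.Mor}
    (hμ : μ ∈ Λ.pathsLe N) (hα : α ∈ Λ.pathsLe N)
    (hβ : β ∈ Λ.pathsLe M) (hν : ν ∈ Λ.pathsLe M) :
    E.Sstar μ * (E.S α * E.Sstar β) * E.S ν =
      if μ = α ∧ β = ν then E.P (Λ.s μ) * E.P (Λ.s β) else 0 := by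
  have h1 : E.Sstar μ * (E.S α * E.Sstar β) * E.S ν
      = (E.Sstar μ * E.S α) * (E.Sstar β * E.S ν) := by
    rw [mul_assoc, mul_assoc, mul_assoc]
  rw [h1, E.Sstar_mul_S hμ hα, E.Sstar_mul_S hβ hν]
  by_cases h2 : μ = α <;> by_cases h3 : β = ν <;> simp [h2, h3]

/-- If `x ∈ I` is homogeneous and `ψ` matches the family `F` with a family `T` that kills
all paths with source in `H(I)`, then `ψ x = 0`. -/
lemma kill_homogeneous {B : Type u₂} [Ring B] [Algebra R B]
    (F : KPFamily Λ R A) (T : KPFamily Λ R B)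
    (I : TwoSidedIdeal A) (hIb : F.IsBasicIdeal I) (hrf : Λ.RowFinite)
    (ψ : A →ₐ[R] B)
    (hψS : ∀ f, ψ (F.S f) = T.S f) (hψStar : ∀ f, ψ (F.Sstar f) = T.Sstar f)
    (hkill : ∀ f : Λ.Mor, F.P (Λ.s f) ∈ I → T.S f = 0)
    {n : Fin k → ℤ} {x : A} (hxI : x ∈ I) (hx : x ∈ F.component n) :
    ψ x = 0 := by
  classical
  rw [KPFamily.component, Submodule.mem_span_set'] at hx
  obtain ⟨m, c, g, hsum⟩ := hx
  rcases Nat.eq_zero_or_pos m with hm | hm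
  · subst hm
    simp only [Finset.univ_eq_empty, Finset.sum_empty] at hsum
    rw [← hsum, map_zero]
  have hw : ∀ i, ∃ ab : Λ.Mor × Λ.Mor,
      (∀ j, (Λ.d ab.1 j : ℤ) - Λ.d ab.2 j = n j) ∧ (g i : A) = F.S ab.1 * F.Sstar ab.2 := by
    intro i
    obtain ⟨α, β, h1, h2⟩ := (g i).2
    exact ⟨(α, β), h1, h2⟩
  choose ab hdeg hval using hw
  set α : Fin m → Λ.Mor := fun i => (ab i).1 with hα_def
  set β : Fin m → Λ.Mor := fun i => (ab i).2 with hβ_def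
  have hdeg' : ∀ i j, (Λ.d (α i) j : ℤ) - Λ.d (β i) j = n j := hdeg
  have hval' : ∀ i, (g i : A) = F.S (α i) * F.Sstar (β i) := hval
  set N : Fin k → ℕ := fun j => Finset.univ.sup fun i => Λ.d (α i) j with hN_def
  have hNα : ∀ i j, Λ.d (α i) j ≤ N j := fun i j => Finset.le_sup (f := fun i => Λ.d (α i) j) (Finset.mem_univ i)
  have i₀ : Fin m := ⟨0, hm⟩
  set M : Fin k → ℕ := fun j => ((N j : ℤ) - n j).toNat with hM_def
  have hM : ∀ j, (M j : ℤ) = (N j : ℤ) - n j := by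
    intro j
    have h1 := hdeg' i₀ j
    have h2 := hNα i₀ j
    simp only [hM_def]
    omega
  -- restrict to indices with matching sources
  set s₀ : Finset (Fin m) := Finset.univ.filter (fun i => Λ.s (α i) = Λ.s (β i)) with hs₀_def
  have hrestrict : ∀ {C : Type u₂} [Ring C] [Algebra R C] (E : KPFamily Λ R C),
      ∑ i, c i • (E.S (α i) * E.Sstar (β i))
        = ∑ i ∈ s₀, c i • (E.S (α i) * E.Sstar (β i)) := by
    intro C _ _ E
    refine (Finset.sum_subset (Finset.filter_subset _ _) ?_).symm
    intro i _ hi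
    have : Λ.s (α i) ≠ Λ.s (β i) := by
      intro h; exact hi (Finset.mem_filter.mpr ⟨Finset.mem_univ i, h⟩)
    rw [E.SSstar_eq_zero_of_src_ne this, smul_zero]
  have hxF : x = ∑ i ∈ s₀, c i • (F.S (α i) * F.Sstar (β i)) := by
    rw [← hrestrict F, ← hsum]
    exact Finset.sum_congr rfl fun i _ => by rw [hval' i]
  have hψx : ψ x = ∑ i ∈ s₀, c i • (T.S (α i) * T.Sstar (β i)) := by
    rw [← hrestrict T, ← hsum, map_sum]
    refine Finset.sum_congr rfl fun i _ => ?_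
    rw [map_smul, hval' i, map_mul, hψS, hψStar]
  -- expansion data
  set L : Fin m → Finset Λ.Mor := fun i =>
    (KGraph.vPathsLe_finite hrf (Λ.s (α i)) (fun j => N j - Λ.d (α i) j)).toFinset with hL_def
  have hexpand : ∀ {C : Type u₂} [Ring C] [Algebra R C] (E : KPFamily Λ R C),
      ∑ i ∈ s₀, c i • (E.S (α i) * E.Sstar (β i))
        = ∑ i ∈ s₀, ∑ lam ∈ L i, c i • (E.S (Λ.comp (α i) lam) * E.Sstar (Λ.comp (β i) lam)) := by
    intro C _ _ E
    refine Finset.sum_congr rfl fun i hi => ?_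
    have hs : Λ.s (α i) = Λ.s (β i) := (Finset.mem_filter.mp hi).2
    rw [E.SSstar_expand hs (fun j => hNα i j) _, Finset.smul_sum]
  -- grouping
  set S : Finset ((_ : Fin m) × Λ.Mor) := s₀.sigma (fun i => L i) with hS_def
  set gp : ((_ : Fin m) × Λ.Mor) → Λ.Mor × Λ.Mor :=
    fun p => (Λ.comp (α p.1) p.2, Λ.comp (β p.1) p.2) with hgp_def
  set Q : Finset (Λ.Mor × Λ.Mor) := S.image gp with hQ_def
  set C : Λ.Mor × Λ.Mor → R := fun q => ∑ p ∈ S.filter (fun p => gp p = q), c p.1 with hC_def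
  have hgroup : ∀ {C' : Type u₂} [Ring C'] [Algebra R C'] (E : KPFamily Λ R C'),
      ∑ i ∈ s₀, ∑ lam ∈ L i, c i • (E.S (Λ.comp (α i) lam) * E.Sstar (Λ.comp (β i) lam))
        = ∑ q ∈ Q, C q • (E.S q.1 * E.Sstar q.2) := by
    intro C' _ _ E
    rw [Finset.sum_sigma' s₀ L
      (fun i lam => c i • (E.S (Λ.comp (α i) lam) * E.Sstar (Λ.comp (β i) lam)))]
    exact sum_smul_group S gp (fun p => c p.1) (fun q => E.S q.1 * E.Sstar q.2)
  -- membership facts for pairs in Q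
  have hmemQ : ∀ q ∈ Q, q.1 ∈ Λ.pathsLe N ∧ q.2 ∈ Λ.pathsLe M ∧ Λ.s q.1 = Λ.s q.2 := by
    rintro q hq
    obtain ⟨p, hp, rfl⟩ := Finset.mem_image.mp hq
    obtain ⟨hp1, hp2⟩ := Finset.mem_sigma.mp hp
    have hs : Λ.s (α p.1) = Λ.s (β p.1) := (Finset.mem_filter.mp hp1).2
    have hlam : p.2 ∈ Λ.vPathsLe (Λ.s (α p.1)) (fun j => N j - Λ.d (α p.1) j) :=
      (Set.Finite.mem_toFinset _).mp hp2
    have hrlam : Λ.r p.2 = Λ.s (α p.1) := hlam.2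
    constructor
    · have h1 := Λ.comp_mem_pathsLe (α p.1) hlam
      have : (fun j => Λ.d (α p.1) j + (N j - Λ.d (α p.1) j)) = N :=
        funext fun j => Nat.add_sub_cancel' (hNα p.1 j)
      rwa [this] at h1
    constructor
    · have hlam' : p.2 ∈ Λ.vPathsLe (Λ.s (β p.1)) (fun j => N j - Λ.d (α p.1) j) := by
        rwa [← hs]
      have h1 := Λ.comp_mem_pathsLe (β p.1) hlam'
      have : (fun j => Λ.d (β p.1) j + (N j - Λ.d (α p.1) j)) = M := by
        funext j
        have h2 := hdeg' p.1 j
        have h3 := hNα p.1 j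
        have h4 := hM j
        omega
      rwa [this] at h1
    · rw [Λ.s_comp _ _ hrlam.symm, Λ.s_comp _ _ (by rw [hrlam, hs])]
  -- the coefficients vanish unless the source lies in H(I)
  have hCzero : ∀ q ∈ Q, F.P (Λ.s q.1) ∉ I → C q = 0 := by
    intro q hq hPq
    obtain ⟨hq1, hq2, hqs⟩ := hmemQ q hq
    have hxgrp : x = ∑ q' ∈ Q, C q' • (F.S q'.1 * F.Sstar q'.2) := by
      rw [hxF, hexpand F, hgroup F]
    have hextract : F.Sstar q.1 * x * F.S q.2 = C q • F.P (Λ.s q.1) := by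
      rw [hxgrp, Finset.mul_sum, Finset.sum_mul]
      have hterm : ∀ q' ∈ Q,
          F.Sstar q.1 * (C q' • (F.S q'.1 * F.Sstar q'.2)) * F.S q.2
            = C q' • (if q.1 = q'.1 ∧ q'.2 = q.2 then F.P (Λ.s q.1) * F.P (Λ.s q'.2) else 0) := by
        intro q' hq'
        obtain ⟨hq'1, hq'2, _⟩ := hmemQ q' hq'
        rw [mul_smul_comm, smul_mul_assoc, F.extract hq1 hq'1 hq'2 hq2]
      rw [Finset.sum_congr rfl hterm, Finset.sum_eq_single q]
      · rw [if_pos ⟨rfl, rfl⟩, hqs, F.kp1_idem, ← hqs]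
      · intro q' hq' hne
        rw [if_neg, smul_zero]
        rintro ⟨h1, h2⟩
        exact hne (Prod.ext h1.symm h2)
      · intro h; exact absurd hq h
    have hmem : C q • F.P (Λ.s q.1) ∈ I := by
      rw [← hextract]
      exact I.mul_mem_right _ _ (I.mul_mem_left _ _ hxI)
    by_contra hCne
    exact hPq (hIb (C q) (Λ.s q.1) hCne hmem)
  -- conclude
  rw [hψx, hexpand T, hgroup T]
  refine Finset.sum_eq_zero fun q hq => ?_
  by_cases hPq : F.P (Λ.s q.1) ∈ I
  · rw [hkill q.1 hPq, zero_mul, smul_zero]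
  · rw [hCzero q hq hPq, zero_smul]

end Extract
section MapHom
variable {k : ℕ} {Λ : KGraph k} {R : Type*} [CommRing R]
variable {A : Type*} [Ring A] [Algebra R A] {B : Type*} [Ring B] [Algebra R B]

/-- Push a Kumjian–Pask family forward along an algebra homomorphism. -/
def KPFamily.mapHom (E : KPFamily Λ R A) (φ : A →ₐ[R] B) : KPFamily Λ R B where
  P v := φ (E.P v)
  S f := φ (E.S f)
  Sstar f := φ (E.Sstar f)
  S_id v := by rw [E.S_id]
  Sstar_id v := by rw [E.Sstar_id]
  kp1_idem v := by rw [← map_mul, E.kp1_idem]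
  kp1_orth u v h := by rw [← map_mul, E.kp1_orth u v h, map_zero]
  kp2_comp f g h := by rw [← map_mul, E.kp2_comp f g h]
  kp2_comp_star f g h := by rw [← map_mul, E.kp2_comp_star f g h]
  kp2_r f := by rw [← map_mul, E.kp2_r]
  kp2_s f := by rw [← map_mul, E.kp2_s]
  kp2_star_s f := by rw [← map_mul, E.kp2_star_s]
  kp2_star_r f := by rw [← map_mul, E.kp2_star_r]
  kp3_eq n hn f hf := by rw [← map_mul, E.kp3_eq n hn f hf]
  kp3_ne n hn f hf g hg hfg := by rw [← map_mul, E.kp3_ne n hn f hf g hg hfg, map_zero]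
  kp4 v n hn hfin := by
    rw [E.kp4 v n hn hfin, map_sum]
    exact Finset.sum_congr rfl fun f _ => map_mul φ _ _

@[simp] lemma KPFamily.mapHom_P (E : KPFamily Λ R A) (φ : A →ₐ[R] B) (v : Λ.Obj) :
    (E.mapHom φ).P v = φ (E.P v) := rfl

@[simp] lemma KPFamily.mapHom_S (E : KPFamily Λ R A) (φ : A →ₐ[R] B) (f : Λ.Mor) :
    (E.mapHom φ).S f = φ (E.S f) := rfl

@[simp] lemma KPFamily.mapHom_Sstar (E : KPFamily Λ R A) (φ : A →ₐ[R] B) (f : Λ.Mor) :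
    (E.mapHom φ).Sstar f = φ (E.Sstar f) := rfl

end MapHom

section ULiftTransfer
universe w
variable {k : ℕ} {Λ : KGraph k} {R : Type} [CommRing R]

/-- The canonical algebra isomorphism `ULift C ≃ₐ[R] C`. -/
def uliftAlgEquiv {C : Type} [Ring C] [Algebra R C] : ULift.{w} C ≃ₐ[R] C :=
  { ULift.ringEquiv with commutes' := fun _ => rfl }

/-- The universal property of `KP_R(Λ)` transferred to algebras in universe `0`. -/
lemma IsKPAlgebra.existsUnique_algHom {A : Type} [Ring A] [Algebra R A] {F : KPFamily Λ R A}
    (hA : IsKPAlgebra.{w} Λ R A F) {C : Type} [Ring C] [Algebra R C] (G : KPFamily Λ R C) :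
    ∃! π : A →ₐ[R] C,
      (∀ v, π (F.P v) = G.P v) ∧ (∀ f, π (F.S f) = G.S f) ∧
      (∀ f, π (F.Sstar f) = G.Sstar f) := by
  set j : ULift.{w} C ≃ₐ[R] C := uliftAlgEquiv with hj
  obtain ⟨π₀, ⟨h1, h2, h3⟩, huniq⟩ := hA.1 (ULift.{w} C) (G.mapHom j.symm.toAlgHom)
  refine ⟨j.toAlgHom.comp π₀, ⟨fun v => ?_, fun f => ?_, fun f => ?_⟩, ?_⟩
  · simp [h1 v]
  · simp [h2 f]
  · simp [h3 f]
  · rintro π' ⟨h1', h2', h3'⟩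
    have hcomp : j.symm.toAlgHom.comp π' = π₀ := by
      refine huniq _ ⟨fun v => ?_, fun f => ?_, fun f => ?_⟩
      · simp [h1' v]
      · simp [h2' f]
      · simp [h3' f]
    refine AlgHom.ext fun a => ?_
    have := congrArg (fun (p : A →ₐ[R] ULift.{w} C) => j (p a)) hcomp
    simpa using this
end ULiftTransfer
section HSection
variable {k : ℕ} {Λ Λ' : KGraph k} {H : Set Λ.Obj}

namespace RestrictionIso
variable (e : RestrictionIso Λ' Λ H)

lemma objMap_not_mem (v' : Λ'.Obj) : e.objMap v' ∉ H := by
  have h : e.objMap v' ∈ Set.range e.objMap := ⟨v', rfl⟩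
  rw [e.objMap_range] at h
  exact h

lemma r_morMap_not_mem (f' : Λ'.Mor) : Λ.r (e.morMap f') ∉ H := by
  rw [e.map_r]; exact e.objMap_not_mem _

lemma s_morMap_not_mem (f' : Λ'.Mor) : Λ.s (e.morMap f') ∉ H := by
  rw [e.map_s]; exact e.objMap_not_mem _

lemma mem_range_morMap_iff {f : Λ.Mor} :
    f ∈ Set.range e.morMap ↔ Λ.r f ∉ H ∧ Λ.s f ∉ H := by
  rw [e.morMap_range]; rfl

lemma mem_range_objMap_iff {v : Λ.Obj} :
    v ∈ Set.range e.objMap ↔ v ∉ H := by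
  rw [e.objMap_range]; rfl

/-- The easy direction: a path of `Λ` lying in `Λ^{≤n}` restricts to `(Λ\H)^{≤n}`. -/
lemma pathsLe_of_morMap {f' : Λ'.Mor} {n : Fin k → ℕ}
    (h : e.morMap f' ∈ Λ.pathsLe n) : f' ∈ Λ'.pathsLe n := by
  rw [KGraph.mem_pathsLe] at h ⊢
  refine ⟨fun i => by rw [← e.map_d]; exact h.1 i, fun i hi g' hg' => ?_⟩
  have hi' : Λ.d (e.morMap f') i < n i := by rw [e.map_d]; exact hi
  refine h.2 i hi' (e.morMap g') ⟨?_, by rw [e.map_d]; exact hg'.2⟩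
  rw [e.map_r, hg'.1, ← e.map_s]

/-- The hard direction, using saturation of `H`. -/
lemma morMap_pathsLe (hHsat : Λ.Saturated H) {f' : Λ'.Mor} {n : Fin k → ℕ}
    (h : f' ∈ Λ'.pathsLe n) : e.morMap f' ∈ Λ.pathsLe n := by
  rw [KGraph.mem_pathsLe] at h ⊢
  refine ⟨fun i => by rw [e.map_d]; exact h.1 i, fun i hi g hg => ?_⟩
  rw [e.map_d] at hi
  -- every extension of `s (morMap f')` of degree `eᵢ` has source in `H`
  have hall : ∀ g₀ : Λ.Mor, Λ.r g₀ = Λ.s (e.morMap f') → Λ.d g₀ = Pi.single i 1 →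
      Λ.s g₀ ∈ H := by
    intro g₀ hr₀ hd₀
    by_contra hs₀
    have hrange : g₀ ∈ Set.range e.morMap := by
      rw [e.mem_range_morMap_iff]
      exact ⟨by rw [hr₀]; exact e.s_morMap_not_mem f', hs₀⟩
    obtain ⟨g₀', rfl⟩ := hrange
    refine h.2 i hi g₀' ⟨?_, by rw [← e.map_d]; exact hd₀⟩
    apply e.objMap_injective
    rw [← e.map_r, hr₀, e.map_s]
  -- hence by saturation `s (morMap f') ∈ H`, a contradiction
  have hsat : Λ.s (e.morMap f') ∈ H := by
    refine hHsat _ ⟨i, fun p hp => ?_⟩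
    obtain ⟨hp1, hp2⟩ := hp
    rw [KGraph.mem_pathsLe] at hp1
    by_cases hd : Λ.d p i = 1
    · refine hall p hp2 (funext fun j => ?_)
      by_cases hji : j = i
      · subst hji; rw [hd, Pi.single_eq_same]
      · have := hp1.1 j
        rw [Pi.single_eq_of_ne hji] at this ⊢
        omega
    · have hdi : Λ.d p i < (Pi.single i 1 : Fin k → ℕ) i := by
        have := hp1.1 i; rw [Pi.single_eq_same] at this ⊢; omega
      have hdp0 : Λ.d p = 0 := by
        funext j
        show Λ.d p j = (0 : Fin k → ℕ) j
        rw [Pi.zero_apply]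
        by_cases hji : j = i
        · subst hji
          have h2 := hdi
          rw [Pi.single_eq_same] at h2
          omega
        · have h2 := hp1.1 j
          rw [Pi.single_eq_of_ne hji] at h2
          omega
      have hsp : Λ.s p = Λ.r p := by
        conv_lhs => rw [Λ.eq_id_of_d_eq_zero p hdp0]
        rw [Λ.s_id]
      exact absurd (hp1.2 i hdi g ⟨by rw [hg.1, ← hp2, ← hsp], hg.2⟩) (fun hh => hh)
  exact (e.s_morMap_not_mem f') hsat

lemma image_vPathsLe (hHsat : Λ.Saturated H) (v' : Λ'.Obj) (n : Fin k → ℕ) :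
    e.morMap '' (Λ'.vPathsLe v' n)
      = {f ∈ Λ.vPathsLe (e.objMap v') n | Λ.s f ∉ H} := by
  ext f
  constructor
  · rintro ⟨f', hf', rfl⟩
    exact ⟨⟨e.morMap_pathsLe hHsat hf'.1, by rw [e.map_r, hf'.2]⟩, e.s_morMap_not_mem f'⟩
  · rintro ⟨⟨hf1, hf2⟩, hf3⟩
    have hrange : f ∈ Set.range e.morMap := by
      rw [e.mem_range_morMap_iff]
      exact ⟨by rw [hf2]; exact e.objMap_not_mem v', hf3⟩
    obtain ⟨f', rfl⟩ := hrange
    refine ⟨f', ⟨e.pathsLe_of_morMap hf1, ?_⟩, rfl⟩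
    apply e.objMap_injective
    rw [← e.map_r, hf2]

lemma vPathsLe_finite' (e : RestrictionIso Λ' Λ H) (hrf : Λ.RowFinite) (v' : Λ'.Obj) (n : Fin k → ℕ) :
    (Λ'.vPathsLe v' n).Finite := by
  apply Set.Finite.of_finite_image (f := e.morMap) _
    (Set.injOn_of_injective e.morMap_injective)
  have hsub : e.morMap '' (Λ'.vPathsLe v' n)
      ⊆ ⋃ m ∈ {m : Fin k → ℕ | ∀ i, m i ≤ n i}, Λ.vSet (e.objMap v') m := by
    rintro f ⟨f', hf', rfl⟩
    refine Set.mem_biUnion (show Λ.d (e.morMap f') ∈ {m : Fin k → ℕ | ∀ i, m i ≤ n i} from ?_) ?_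
    · intro i
      rw [e.map_d]
      exact (KGraph.mem_pathsLe.mp hf'.1).1 i
    · exact ⟨by rw [e.map_r, hf'.2], rfl⟩
  have hfin : ({m : Fin k → ℕ | ∀ i, m i ≤ n i}).Finite :=
    Set.Finite.subset (Set.Finite.pi (fun i => Set.finite_Iic (n i)))
      (fun m hm i _ => hm i)
  exact Set.Finite.subset (Set.Finite.biUnion hfin (fun m _ => hrf _ m)) hsub

/-- Transfer of `KP4`-sums from `Λ` to `Λ \ H`. -/
lemma sum_vPathsLe (hHsat : Λ.Saturated H) {M : Type*} [AddCommMonoid M]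
    (φ : Λ.Mor → M) (v' : Λ'.Obj) (n : Fin k → ℕ)
    (hfin : (Λ.vPathsLe (e.objMap v') n).Finite)
    (hfin' : (Λ'.vPathsLe v' n).Finite)
    (hz : ∀ f ∈ Λ.vPathsLe (e.objMap v') n, Λ.s f ∈ H → φ f = 0) :
    ∑ f ∈ hfin.toFinset, φ f = ∑ f' ∈ hfin'.toFinset, φ (e.morMap f') := by
  classical
  have h1 : ∑ f ∈ hfin.toFinset, φ f
      = ∑ f ∈ hfin.toFinset.filter (fun f => Λ.s f ∉ H), φ f := by
    refine (Finset.sum_subset (Finset.filter_subset _ _) ?_).symm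
    intro f hf hf'
    refine hz f (hfin.mem_toFinset.mp hf) ?_
    by_contra hsf
    exact hf' (Finset.mem_filter.mpr ⟨hf, hsf⟩)
  have h2 : hfin.toFinset.filter (fun f => Λ.s f ∉ H)
      = hfin'.toFinset.image e.morMap := by
    ext f
    rw [Finset.mem_filter, Finset.mem_image]
    constructor
    · rintro ⟨hf, hsf⟩
      have : f ∈ e.morMap '' (Λ'.vPathsLe v' n) := by
        rw [e.image_vPathsLe hHsat]
        exact ⟨hfin.mem_toFinset.mp hf, hsf⟩
      obtain ⟨f', hf', rfl⟩ := this
      exact ⟨f', hfin'.mem_toFinset.mpr hf', rfl⟩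
    · rintro ⟨f', hf', rfl⟩
      have : e.morMap f' ∈ e.morMap '' (Λ'.vPathsLe v' n) :=
        ⟨f', hfin'.mem_toFinset.mp hf', rfl⟩
      rw [e.image_vPathsLe hHsat] at this
      exact ⟨hfin.mem_toFinset.mpr this.1, this.2⟩
  rw [h1, h2, Finset.sum_image (fun a _ b _ hab => e.morMap_injective hab)]

end RestrictionIso

end HSection

section HIdeal
variable {k : ℕ} {Λ : KGraph k} {R : Type*} [CommRing R] {A : Type*} [Ring A] [Algebra R A]
variable (F : KPFamily Λ R A) (I : TwoSidedIdeal A)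

lemma KPFamily.S_mem_of_r {f : Λ.Mor} (h : Λ.r f ∈ F.HSet I) : F.S f ∈ I := by
  rw [← F.kp2_r f]
  exact I.mul_mem_right _ _ h

lemma KPFamily.S_mem_of_s {f : Λ.Mor} (h : Λ.s f ∈ F.HSet I) : F.S f ∈ I := by
  rw [← F.kp2_s f]
  exact I.mul_mem_left _ _ h

lemma KPFamily.Sstar_mem_of_r {f : Λ.Mor} (h : Λ.r f ∈ F.HSet I) : F.Sstar f ∈ I := by
  rw [← F.kp2_star_r f]
  exact I.mul_mem_left _ _ h

lemma KPFamily.Sstar_mem_of_s {f : Λ.Mor} (h : Λ.s f ∈ F.HSet I) : F.Sstar f ∈ I := by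
  rw [← F.kp2_star_s f]
  exact I.mul_mem_right _ _ h

lemma KPFamily.HSet_hereditary : Λ.Hereditary (F.HSet I) := by
  intro f hf
  by_cases hd : Λ.d f = 0
  · have h := Λ.eq_id_of_d_eq_zero f hd
    show F.P (Λ.s f) ∈ I
    rw [h, Λ.s_id]
    exact hf
  · have h3 := F.kp3_eq (Λ.d f) hd f (Λ.self_mem_pathsLe f)
    show F.P (Λ.s f) ∈ I
    rw [← h3]
    exact I.mul_mem_left _ _ (F.S_mem_of_r I hf)

lemma KPFamily.HSet_saturated (hrf : Λ.RowFinite) : Λ.Saturated (F.HSet I) := by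
  rintro v ⟨i, hi⟩
  have hne : (Pi.single i 1 : Fin k → ℕ) ≠ 0 := fun h => by simpa using congrFun h i
  have hfin := Λ.vPathsLe_finite hrf v (Pi.single i 1)
  show F.P v ∈ I
  rw [F.kp4 v _ hne hfin]
  refine sum_mem fun f hf => ?_
  have hsf : F.P (Λ.s f) ∈ I := hi f (hfin.mem_toFinset.mp hf)
  rw [← F.kp2_star_s f, ← mul_assoc]
  exact I.mul_mem_right _ _ (I.mul_mem_left _ _ hsf)

end HIdeal
section ExtFamily
open scoped Classical
variable {k : ℕ} {Λ Λ' : KGraph k} {H : Set Λ.Obj}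
variable {R : Type*} [CommRing R] {B : Type*} [Ring B] [Algebra R B]

namespace RestrictionIso
variable (e : RestrictionIso Λ' Λ H) (G : KPFamily Λ' R B)

noncomputable def extP (v : Λ.Obj) : B :=
  if h : v ∈ Set.range e.objMap then G.P h.choose else 0

noncomputable def extS (f : Λ.Mor) : B :=
  if h : f ∈ Set.range e.morMap then G.S h.choose else 0

noncomputable def extSstar (f : Λ.Mor) : B :=
  if h : f ∈ Set.range e.morMap then G.Sstar h.choose else 0

lemma extP_objMap (v' : Λ'.Obj) : e.extP G (e.objMap v') = G.P v' := by
  have h : e.objMap v' ∈ Set.range e.objMap := ⟨v', rfl⟩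
  rw [extP, dif_pos h]
  congr 1
  exact e.objMap_injective h.choose_spec

lemma extS_morMap (f' : Λ'.Mor) : e.extS G (e.morMap f') = G.S f' := by
  have h : e.morMap f' ∈ Set.range e.morMap := ⟨f', rfl⟩
  rw [extS, dif_pos h]
  congr 1
  exact e.morMap_injective h.choose_spec

lemma extSstar_morMap (f' : Λ'.Mor) : e.extSstar G (e.morMap f') = G.Sstar f' := by
  have h : e.morMap f' ∈ Set.range e.morMap := ⟨f', rfl⟩
  rw [extSstar, dif_pos h]
  congr 1
  exact e.morMap_injective h.choose_spec

lemma extP_of_mem {v : Λ.Obj} (hv : v ∈ H) : e.extP G v = 0 :=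
  dif_neg (fun hr => (e.mem_range_objMap_iff.mp hr) hv)

lemma extS_of_r {f : Λ.Mor} (h : Λ.r f ∈ H) : e.extS G f = 0 :=
  dif_neg (fun hr => (e.mem_range_morMap_iff.mp hr).1 h)

lemma extS_of_s {f : Λ.Mor} (h : Λ.s f ∈ H) : e.extS G f = 0 :=
  dif_neg (fun hr => (e.mem_range_morMap_iff.mp hr).2 h)

lemma extSstar_of_r {f : Λ.Mor} (h : Λ.r f ∈ H) : e.extSstar G f = 0 :=
  dif_neg (fun hr => (e.mem_range_morMap_iff.mp hr).1 h)

lemma extSstar_of_s {f : Λ.Mor} (h : Λ.s f ∈ H) : e.extSstar G f = 0 :=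
  dif_neg (fun hr => (e.mem_range_morMap_iff.mp hr).2 h)

lemma s_mem_of_not_range (hHher : Λ.Hereditary H) {f : Λ.Mor}
    (hf : f ∉ Set.range e.morMap) : Λ.s f ∈ H := by
  rw [e.mem_range_morMap_iff] at hf
  push_neg at hf
  by_cases hr : Λ.r f ∈ H
  · exact hHher f hr
  · by_contra hs
    exact hs (hf hr)

/-- The extension-by-zero of the `Λ\H`-family `G` to a `Λ`-family. -/
noncomputable def extFamily (hHher : Λ.Hereditary H) (hHsat : Λ.Saturated H)
    (hrf : Λ.RowFinite) : KPFamily Λ R B where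
  P := e.extP G
  S := e.extS G
  Sstar := e.extSstar G
  S_id v := by
    by_cases hv : v ∈ Set.range e.objMap
    · obtain ⟨v', rfl⟩ := hv
      rw [← e.map_id, extS_morMap, G.S_id, extP_objMap]
    · have hvH : v ∈ H := by
        by_contra hs
        exact hv (e.mem_range_objMap_iff.mpr hs)
      rw [extP_of_mem e G hvH, extS_of_r]
      rw [Λ.r_id]; exact hvH
  Sstar_id v := by
    by_cases hv : v ∈ Set.range e.objMap
    · obtain ⟨v', rfl⟩ := hv
      rw [← e.map_id, extSstar_morMap, G.Sstar_id, extP_objMap]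
    · have hvH : v ∈ H := by
        by_contra hs
        exact hv (e.mem_range_objMap_iff.mpr hs)
      rw [extP_of_mem e G hvH, extSstar_of_r]
      rw [Λ.r_id]; exact hvH
  kp1_idem v := by
    by_cases hv : v ∈ Set.range e.objMap
    · obtain ⟨v', rfl⟩ := hv
      rw [extP_objMap, G.kp1_idem]
    · have hvH : v ∈ H := by
        by_contra hs
        exact hv (e.mem_range_objMap_iff.mpr hs)
      rw [extP_of_mem e G hvH, mul_zero]
  kp1_orth u v h := by
    by_cases hu : u ∈ Set.range e.objMap
    · by_cases hv : v ∈ Set.range e.objMap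
      · obtain ⟨u', rfl⟩ := hu
        obtain ⟨v', rfl⟩ := hv
        rw [extP_objMap, extP_objMap]
        exact G.kp1_orth u' v' (fun hh => h (congrArg e.objMap hh))
      · have hvH : v ∈ H := by
          by_contra hs
          exact hv (e.mem_range_objMap_iff.mpr hs)
        rw [extP_of_mem e G hvH, mul_zero]
    · have huH : u ∈ H := by
        by_contra hs
        exact hu (e.mem_range_objMap_iff.mpr hs)
      rw [extP_of_mem e G huH, zero_mul]
  kp2_comp f g hfg := by
    by_cases hg : g ∈ Set.range e.morMap
    · by_cases hf : f ∈ Set.range e.morMap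
      · obtain ⟨f', rfl⟩ := hf
        obtain ⟨g', rfl⟩ := hg
        have hc : Λ'.s f' = Λ'.r g' := by
          apply e.objMap_injective
          rw [← e.map_s, ← e.map_r, hfg]
        rw [← e.map_comp f' g' hc, extS_morMap, extS_morMap, extS_morMap,
          G.kp2_comp f' g' hc]
      · have hsf : Λ.s f ∈ H := e.s_mem_of_not_range hHher hf
        have hsg : Λ.s g ∈ H := hHher g (by rw [← hfg]; exact hsf)
        rw [extS_of_s e G hsf, zero_mul, extS_of_s]
        rw [Λ.s_comp f g hfg]; exact hsg
    · have hsg : Λ.s g ∈ H := e.s_mem_of_not_range hHher hg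
      rw [extS_of_s e G hsg, mul_zero, extS_of_s]
      rw [Λ.s_comp f g hfg]; exact hsg
  kp2_comp_star f g hfg := by
    by_cases hg : g ∈ Set.range e.morMap
    · by_cases hf : f ∈ Set.range e.morMap
      · obtain ⟨f', rfl⟩ := hf
        obtain ⟨g', rfl⟩ := hg
        have hc : Λ'.s f' = Λ'.r g' := by
          apply e.objMap_injective
          rw [← e.map_s, ← e.map_r, hfg]
        rw [← e.map_comp f' g' hc, extSstar_morMap, extSstar_morMap, extSstar_morMap,
          G.kp2_comp_star f' g' hc]
      · have hsf : Λ.s f ∈ H := e.s_mem_of_not_range hHher hf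
        have hsg : Λ.s g ∈ H := hHher g (by rw [← hfg]; exact hsf)
        rw [extSstar_of_s e G hsf, mul_zero, extSstar_of_s]
        rw [Λ.s_comp f g hfg]; exact hsg
    · have hsg : Λ.s g ∈ H := e.s_mem_of_not_range hHher hg
      rw [extSstar_of_s e G hsg, zero_mul, extSstar_of_s]
      rw [Λ.s_comp f g hfg]; exact hsg
  kp2_r f := by
    by_cases hf : f ∈ Set.range e.morMap
    · obtain ⟨f', rfl⟩ := hf
      rw [e.map_r, extP_objMap, extS_morMap, G.kp2_r]
    · have hsf : Λ.s f ∈ H := e.s_mem_of_not_range hHher hf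
      rw [extS_of_s e G hsf, mul_zero]
  kp2_s f := by
    by_cases hf : f ∈ Set.range e.morMap
    · obtain ⟨f', rfl⟩ := hf
      rw [e.map_s, extP_objMap, extS_morMap, G.kp2_s]
    · have hsf : Λ.s f ∈ H := e.s_mem_of_not_range hHher hf
      rw [extS_of_s e G hsf, zero_mul]
  kp2_star_s f := by
    by_cases hf : f ∈ Set.range e.morMap
    · obtain ⟨f', rfl⟩ := hf
      rw [e.map_s, extP_objMap, extSstar_morMap, G.kp2_star_s]
    · have hsf : Λ.s f ∈ H := e.s_mem_of_not_range hHher hf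
      rw [extSstar_of_s e G hsf, mul_zero]
  kp2_star_r f := by
    by_cases hf : f ∈ Set.range e.morMap
    · obtain ⟨f', rfl⟩ := hf
      rw [e.map_r, extP_objMap, extSstar_morMap, G.kp2_star_r]
    · have hsf : Λ.s f ∈ H := e.s_mem_of_not_range hHher hf
      rw [extSstar_of_s e G hsf, zero_mul]
  kp3_eq n hn f hf := by
    by_cases hfr : f ∈ Set.range e.morMap
    · obtain ⟨f', rfl⟩ := hfr
      rw [extSstar_morMap, extS_morMap, G.kp3_eq n hn f' (e.pathsLe_of_morMap hf),
        e.map_s, extP_objMap]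
    · have hsf : Λ.s f ∈ H := e.s_mem_of_not_range hHher hfr
      rw [extSstar_of_s e G hsf, zero_mul, extP_of_mem e G hsf]
  kp3_ne n hn f hf g hg hfg := by
    by_cases hfr : f ∈ Set.range e.morMap
    · by_cases hgr : g ∈ Set.range e.morMap
      · obtain ⟨f', rfl⟩ := hfr
        obtain ⟨g', rfl⟩ := hgr
        rw [extSstar_morMap, extS_morMap]
        exact G.kp3_ne n hn f' (e.pathsLe_of_morMap hf) g' (e.pathsLe_of_morMap hg)
          (fun hh => hfg (congrArg e.morMap hh))
      · have hsg : Λ.s g ∈ H := e.s_mem_of_not_range hHher hgr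
        rw [extS_of_s e G hsg, mul_zero]
    · have hsf : Λ.s f ∈ H := e.s_mem_of_not_range hHher hfr
      rw [extSstar_of_s e G hsf, zero_mul]
  kp4 v n hn hfin := by
    by_cases hv : v ∈ Set.range e.objMap
    · obtain ⟨v', rfl⟩ := hv
      have hfin' := e.vPathsLe_finite' hrf v' n
      rw [extP_objMap, G.kp4 v' n hn hfin',
        e.sum_vPathsLe hHsat (fun f => e.extS G f * e.extSstar G f) v' n hfin hfin'
          (fun f _ hsf => by rw [extS_of_s e G hsf, zero_mul])]
      exact Finset.sum_congr rfl fun f' _ => by rw [extS_morMap, extSstar_morMap]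
    · have hvH : v ∈ H := by
        by_contra hs
        exact hv (e.mem_range_objMap_iff.mpr hs)
      rw [extP_of_mem e G hvH]
      refine (Finset.sum_eq_zero fun f hf => ?_).symm
      have hrf' : Λ.r f = v := (hfin.mem_toFinset.mp hf).2
      have hsf : Λ.s f ∈ H := hHher f (by rw [hrf']; exact hvH)
      rw [extS_of_s e G hsf, zero_mul]

@[simp] lemma extFamily_P (hHher : Λ.Hereditary H) (hHsat : Λ.Saturated H)
    (hrf : Λ.RowFinite) (v : Λ.Obj) :
    (e.extFamily G hHher hHsat hrf).P v = e.extP G v := rfl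

@[simp] lemma extFamily_S (hHher : Λ.Hereditary H) (hHsat : Λ.Saturated H)
    (hrf : Λ.RowFinite) (f : Λ.Mor) :
    (e.extFamily G hHher hHsat hrf).S f = e.extS G f := rfl

@[simp] lemma extFamily_Sstar (hHher : Λ.Hereditary H) (hHsat : Λ.Saturated H)
    (hrf : Λ.RowFinite) (f : Λ.Mor) :
    (e.extFamily G hHher hHsat hrf).Sstar f = e.extSstar G f := rfl

end RestrictionIso
end ExtFamily
section QuotAlg
variable {k : ℕ} {Λ Λ' : KGraph k} {R : Type} [CommRing R] {A : Type} [Ring A] [Algebra R A]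

/-- The quotient of `A` by the two-sided ideal `I`. -/
def TwoSidedIdeal.Quot (I : TwoSidedIdeal A) : Type := I.ringCon.Quotient

instance (I : TwoSidedIdeal A) : Ring I.Quot := inferInstanceAs (Ring I.ringCon.Quotient)

noncomputable instance (I : TwoSidedIdeal A) : Algebra R I.Quot :=
  ((I.ringCon.mk' : A →+* I.ringCon.Quotient).comp (algebraMap R A)).toAlgebra'
    (fun r x => by
      refine Quotient.inductionOn' x (fun a => ?_)
      show I.ringCon.mk' (algebraMap R A r) * I.ringCon.mk' a
        = I.ringCon.mk' a * I.ringCon.mk' (algebraMap R A r)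
      rw [← map_mul, ← map_mul, Algebra.commutes])

/-- The quotient map as an algebra homomorphism. -/
noncomputable def TwoSidedIdeal.qMk (I : TwoSidedIdeal A) : A →ₐ[R] I.Quot :=
  { (I.ringCon.mk' : A →+* I.ringCon.Quotient) with commutes' := fun _ => rfl }

lemma TwoSidedIdeal.qMk_eq_zero_iff (I : TwoSidedIdeal A) (a : A) :
    I.qMk (R := R) a = 0 ↔ a ∈ I := by
  have h0 : (0 : I.Quot) = I.qMk (R := R) (0 : A) := (map_zero _).symm
  rw [h0]
  show (a : I.ringCon.Quotient) = ((0 : A) : I.ringCon.Quotient) ↔ a ∈ I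
  rw [RingCon.eq, I.rel_iff, sub_zero]

lemma TwoSidedIdeal.qMk_surjective (I : TwoSidedIdeal A) :
    Function.Surjective (I.qMk (R := R)) := by
  intro x
  obtain ⟨a, ha⟩ := Quotient.exists_rep x
  exact ⟨a, ha⟩

/-- Lift an algebra homomorphism that kills `I` to the quotient. -/
noncomputable def TwoSidedIdeal.quotLift (I : TwoSidedIdeal A) {B : Type} [Ring B]
    [Algebra R B] (ψ : A →ₐ[R] B) (h : ∀ a ∈ I, ψ a = 0) : I.Quot →ₐ[R] B where
  toFun := fun x => Quotient.liftOn' x ψ (fun a b hab => by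
    have hab' : a - b ∈ I := (I.rel_iff a b).mp hab
    have h2 : ψ a - ψ b = 0 := by rw [← map_sub]; exact h _ hab'
    exact sub_eq_zero.mp h2)
  map_one' := map_one ψ
  map_mul' := fun x y => Quotient.inductionOn₂' x y fun a b => map_mul ψ a b
  map_zero' := map_zero ψ
  map_add' := fun x y => Quotient.inductionOn₂' x y fun a b => map_add ψ a b
  commutes' := fun r => ψ.commutes r

lemma TwoSidedIdeal.quotLift_qMk (I : TwoSidedIdeal A) {B : Type} [Ring B]
    [Algebra R B] (ψ : A →ₐ[R] B) (h : ∀ a ∈ I, ψ a = 0) (a : A) :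
    I.quotLift ψ h (I.qMk (R := R) a) = ψ a := by
  with_unfolding_all rfl

end QuotAlg
section QuotFamily
variable {k : ℕ} {Λ Λ' : KGraph k} {R : Type} [CommRing R] {A : Type} [Ring A] [Algebra R A]
variable (F : KPFamily Λ R A) (I : TwoSidedIdeal A)

/-- The quotient `Λ\H(I)`-family in `A/I`. -/
noncomputable def RestrictionIso.quotFamily (e : RestrictionIso Λ' Λ (F.HSet I))
    (hrf : Λ.RowFinite) : KPFamily Λ' R I.Quot where
  P v' := I.qMk (R := R) (F.P (e.objMap v'))
  S f' := I.qMk (R := R) (F.S (e.morMap f'))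
  Sstar f' := I.qMk (R := R) (F.Sstar (e.morMap f'))
  S_id v' := by rw [e.map_id, F.S_id]
  Sstar_id v' := by rw [e.map_id, F.Sstar_id]
  kp1_idem v' := by rw [← map_mul, F.kp1_idem]
  kp1_orth u v h := by
    rw [← map_mul, F.kp1_orth _ _ (fun hh => h (e.objMap_injective hh)), map_zero]
  kp2_comp f g hc := by
    have hc' : Λ.s (e.morMap f) = Λ.r (e.morMap g) := by rw [e.map_s, e.map_r, hc]
    rw [← map_mul, F.kp2_comp _ _ hc', ← e.map_comp f g hc]
  kp2_comp_star f g hc := by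
    have hc' : Λ.s (e.morMap f) = Λ.r (e.morMap g) := by rw [e.map_s, e.map_r, hc]
    rw [← map_mul, F.kp2_comp_star _ _ hc', ← e.map_comp f g hc]
  kp2_r f := by rw [← map_mul, ← e.map_r, F.kp2_r]
  kp2_s f := by rw [← map_mul, ← e.map_s, F.kp2_s]
  kp2_star_s f := by rw [← map_mul, ← e.map_s, F.kp2_star_s]
  kp2_star_r f := by rw [← map_mul, ← e.map_r, F.kp2_star_r]
  kp3_eq n hn f hf := by
    rw [← map_mul, F.kp3_eq n hn _ (e.morMap_pathsLe (F.HSet_saturated I hrf) hf), e.map_s]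
  kp3_ne n hn f hf g hg hfg := by
    rw [← map_mul, F.kp3_ne n hn _ (e.morMap_pathsLe (F.HSet_saturated I hrf) hf)
      _ (e.morMap_pathsLe (F.HSet_saturated I hrf) hg)
      (fun hh => hfg (e.morMap_injective hh)), map_zero]
  kp4 v' n hn hfin' := by
    have hfin := Λ.vPathsLe_finite hrf (e.objMap v') n
    have hz : ∀ f ∈ Λ.vPathsLe (e.objMap v') n, Λ.s f ∈ F.HSet I →
        I.qMk (R := R) (F.S f * F.Sstar f) = 0 := by
      intro f _ hsf
      rw [I.qMk_eq_zero_iff]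
      exact I.mul_mem_right _ _ (F.S_mem_of_s I hsf)
    calc I.qMk (R := R) (F.P (e.objMap v'))
        = I.qMk (∑ f ∈ hfin.toFinset, F.S f * F.Sstar f) := by rw [← F.kp4 _ n hn hfin]
      _ = ∑ f ∈ hfin.toFinset, I.qMk (R := R) (F.S f * F.Sstar f) := map_sum _ _ _
      _ = ∑ f' ∈ hfin'.toFinset, I.qMk (R := R) (F.S (e.morMap f') * F.Sstar (e.morMap f')) :=
          e.sum_vPathsLe (F.HSet_saturated I hrf) _ v' n hfin hfin' hz
      _ = ∑ f' ∈ hfin'.toFinset, I.qMk (R := R) (F.S (e.morMap f'))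
            * I.qMk (R := R) (F.Sstar (e.morMap f')) :=
          Finset.sum_congr rfl fun f' _ => map_mul _ _ _

end QuotFamily
/-- For a basic graded ideal `I` of `KP_R(Λ)` there is an
isomorphism `π : KP_R(Λ \ H(I)) → KP_R(Λ)/I` with `π(q_v) = p_v + I`,
`π(t_λ) = m_λ + I` and `π(t_{μ*}) = m_{μ*} + I`.  This is expressed by a
surjective `R`-algebra homomorphism `ψ : KP_R(Λ) → KP_R(Λ \ H(I))` with kernel
`I` (namely `ψ = π⁻¹ ∘ (quotient map)`) matching the two families. -/
theorem quotient_iso_of_basic_graded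
    {k : ℕ} (Λ : KGraph k) (hrf : Λ.RowFinite) (hlc : Λ.LocallyConvex)
    (R : Type) [CommRing R] (A : Type) [Ring A] [Algebra R A]
    (F : KPFamily Λ R A) (hA : IsKPAlgebra Λ R A F)
    (I : TwoSidedIdeal A) (hIb : F.IsBasicIdeal I) (hIgr : F.IsGradedIdeal I)
    (Λ' : KGraph k) (e : RestrictionIso Λ' Λ (F.HSet I))
    (B : Type) [Ring B] [Algebra R B]
    (G : KPFamily Λ' R B) (hBKP : IsKPAlgebra Λ' R B G) :
    ∃ ψ : A →ₐ[R] B, Function.Surjective ψ ∧ (∀ a : A, ψ a = 0 ↔ a ∈ I) ∧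
      (∀ v : Λ'.Obj, ψ (F.P (e.objMap v)) = G.P v) ∧
      (∀ f : Λ'.Mor, ψ (F.S (e.morMap f)) = G.S f) ∧
      (∀ f : Λ'.Mor, ψ (F.Sstar (e.morMap f)) = G.Sstar f) := by
  classical
  have hHher : Λ.Hereditary (F.HSet I) := F.HSet_hereditary I
  have hHsat : Λ.Saturated (F.HSet I) := F.HSet_saturated I hrf
  set T : KPFamily Λ R B := e.extFamily G hHher hHsat hrf with hT
  obtain ⟨ψ, ⟨hψP, hψS, hψStar⟩, -⟩ := hA.existsUnique_algHom T
  obtain ⟨π, ⟨hπP, hπS, hπStar⟩, -⟩ := hBKP.existsUnique_algHom (e.quotFamily F I hrf)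
  -- `π ∘ ψ = qMk` by uniqueness of the induced map into `A/I`
  obtain ⟨θ, -, hθuniq⟩ := hA.existsUnique_algHom (F.mapHom (I.qMk (R := R)))
  have hcomp1 : ∀ v, π (ψ (F.P v)) = I.qMk (R := R) (F.P v) := by
    intro v
    by_cases hv : v ∈ Set.range e.objMap
    · obtain ⟨v', rfl⟩ := hv
      rw [hψP, hT, e.extFamily_P, e.extP_objMap]
      exact hπP v'
    · have hvH : v ∈ F.HSet I := by
        by_contra hs
        exact hv (e.mem_range_objMap_iff.mpr hs)
      rw [hψP, hT, e.extFamily_P, e.extP_of_mem G hvH, map_zero]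
      exact ((I.qMk_eq_zero_iff _).mpr hvH).symm
  have hcomp2 : ∀ f, π (ψ (F.S f)) = I.qMk (R := R) (F.S f) := by
    intro f
    by_cases hf : f ∈ Set.range e.morMap
    · obtain ⟨f', rfl⟩ := hf
      rw [hψS, hT, e.extFamily_S, e.extS_morMap]
      exact hπS f'
    · have hsf : Λ.s f ∈ F.HSet I := e.s_mem_of_not_range hHher hf
      rw [hψS, hT, e.extFamily_S, e.extS_of_s G hsf, map_zero]
      exact ((I.qMk_eq_zero_iff _).mpr (F.S_mem_of_s I hsf)).symm
  have hcomp3 : ∀ f, π (ψ (F.Sstar f)) = I.qMk (R := R) (F.Sstar f) := by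
    intro f
    by_cases hf : f ∈ Set.range e.morMap
    · obtain ⟨f', rfl⟩ := hf
      rw [hψStar, hT, e.extFamily_Sstar, e.extSstar_morMap]
      exact hπStar f'
    · have hsf : Λ.s f ∈ F.HSet I := e.s_mem_of_not_range hHher hf
      rw [hψStar, hT, e.extFamily_Sstar, e.extSstar_of_s G hsf, map_zero]
      exact ((I.qMk_eq_zero_iff _).mpr (F.Sstar_mem_of_s I hsf)).symm
  have h1 : π.comp ψ = I.qMk (R := R) := by
    have e1 := hθuniq (π.comp ψ) ⟨hcomp1, hcomp2, hcomp3⟩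
    have e2 := hθuniq (I.qMk (R := R)) ⟨fun _ => rfl, fun _ => rfl, fun _ => rfl⟩
    rw [e1, e2]
  -- `ψ` kills `I`
  have hIker : ∀ a ∈ I, ψ a = 0 := by
    intro a ha
    have hspan := hIgr a ha
    have hsub : {x : A | x ∈ I ∧ ∃ n, x ∈ F.component n}
        ⊆ (TwoSidedIdeal.ker ψ : Set A) := by
      rintro x ⟨hxI, n, hxc⟩
      rw [SetLike.mem_coe, TwoSidedIdeal.mem_ker ψ]
      refine kill_homogeneous F T I hIb hrf ψ ?_ ?_ ?_ hxI hxc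
      · exact hψS
      · exact hψStar
      · intro f hPf
        rw [hT, e.extFamily_S]
        exact e.extS_of_s G hPf
    have hmem := TwoSidedIdeal.mem_span_iff.mp hspan (TwoSidedIdeal.ker ψ) hsub
    exact (TwoSidedIdeal.mem_ker ψ).mp hmem
  have hker : ∀ a, ψ a = 0 ↔ a ∈ I := by
    intro a
    constructor
    · intro h0
      have hq : I.qMk (R := R) a = 0 := by
        rw [← h1]
        show π (ψ a) = 0
        rw [h0, map_zero]
      exact (I.qMk_eq_zero_iff a).mp hq
    · exact hIker a
  -- surjectivity via the induced map on the quotient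
  set ψbar : I.Quot →ₐ[R] B := I.quotLift ψ hIker with hψbar_def
  have hψbar : ∀ a, ψbar (I.qMk (R := R) a) = ψ a := I.quotLift_qMk ψ hIker
  obtain ⟨ρ, -, hρuniq⟩ := hBKP.existsUnique_algHom G
  have h2 : ψbar.comp π = AlgHom.id R B := by
    have e1 : ψbar.comp π = ρ := by
      refine hρuniq _ ⟨fun v' => ?_, fun f' => ?_, fun f' => ?_⟩
      · show ψbar (π (G.P v')) = G.P v'
        rw [hπP v']
        show ψbar (I.qMk (R := R) (F.P (e.objMap v'))) = G.P v'
        rw [hψbar, hψP, hT, e.extFamily_P, e.extP_objMap]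
      · show ψbar (π (G.S f')) = G.S f'
        rw [hπS f']
        show ψbar (I.qMk (R := R) (F.S (e.morMap f'))) = G.S f'
        rw [hψbar, hψS, hT, e.extFamily_S, e.extS_morMap]
      · show ψbar (π (G.Sstar f')) = G.Sstar f'
        rw [hπStar f']
        show ψbar (I.qMk (R := R) (F.Sstar (e.morMap f'))) = G.Sstar f'
        rw [hψbar, hψStar, hT, e.extFamily_Sstar, e.extSstar_morMap]
    have e2 : AlgHom.id R B = ρ :=
      hρuniq _ ⟨fun _ => rfl, fun _ => rfl, fun _ => rfl⟩
    rw [e1, e2]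
  have hsurj : Function.Surjective ψ := by
    intro b
    have hb : ψbar (π b) = b := DFunLike.congr_fun h2 b
    obtain ⟨a, ha⟩ := I.qMk_surjective (R := R) (π b)
    refine ⟨a, ?_⟩
    rw [← hψbar a, ha, hb]
  refine ⟨ψ, hsurj, hker, fun v => ?_, fun f => ?_, fun f => ?_⟩
  · rw [hψP, hT, e.extFamily_P, e.extP_objMap]
  · rw [hψS, hT, e.extFamily_S, e.extS_morMap]
  · rw [hψStar, hT, e.extFamily_Sstar, e.extSstar_morMap]
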